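/- arXiv:1101.3088 — 2 statements merged into one kernel-verified Lean document; each statement's English description precedes it below -/
import Mathlib

section
/- Let N be an admissible algebra and π an admissible projection. Then for every k with 0 ≤ k ≤ ν(N), dim N_{[k]} + dim N^k = dim N + 1, where N_{[k]} = {x ∈ N : xN^k = 0} (with N_{[0]} = 0 and N^0-conventions as in the paper). Equivalently, the map c ↦ π∘M_c induces a linear isomorphism N_{[k]}/Ann(N) ≅ Hom(N/N^k, Ann(N)). -/
/-- `pw F N k` is the characteristic ideal `N^k`. -/
def pw (F N : Type*) [Field F] [NonUnitalNonAssocRing N] [Module F N] : ℕ → Submodule F N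
  | 0 => ⊤
  | 1 => ⊤
  | (k+2) => Submodule.span F {z : N | ∃ x : N, ∃ y ∈ pw F N (k+1), z = x * y}

/-- The annihilator `Ann(N) = {x | x·N = 0}` of a commutative algebra `N`. -/
def annSub (F N : Type*) [Field F] [NonUnitalCommRing N] [Module F N]
    [SMulCommClass F N N] [IsScalarTower F N N] : Submodule F N where
  carrier := {x | ∀ y : N, x * y = 0}
  add_mem' := by intro a b ha hb y; simp [add_mul, ha y, hb y]
  zero_mem' := by intro y; simp
  smul_mem' := by intro c x hx y; rw [smul_mul_assoc, hx y, smul_zero]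

/-- `annk F N k = N_{[k]}`: `N_{[0]} = 0` and `N_{[k]} = {x | x·N^k = 0}` for `k > 0`
(commutative case). -/
def annk (F N : Type*) [Field F] [NonUnitalCommRing N] [Module F N]
    [SMulCommClass F N N] [IsScalarTower F N N] : ℕ → Submodule F N
  | 0 => ⊥
  | (k+1) =>
    { carrier := {x : N | ∀ y ∈ pw F N (k+1), x * y = 0}
      add_mem' := by intro a b ha hb y hy; simp [add_mul, ha y hy, hb y hy]
      zero_mem' := by intro y _; simp
      smul_mem' := by intro c x hx y hy; rw [smul_mul_assoc, hx y hy, smul_zero] }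

lemma pw_succ_le (F N : Type*) [Field F] [NonUnitalNonAssocRing N] [Module F N] :
    ∀ m, pw F N (m+1) ≤ pw F N m := by
  intro m
  induction m with
  | zero => exact le_of_eq rfl
  | succ j ih =>
    show Submodule.span F {z : N | ∃ x : N, ∃ y ∈ pw F N (j+1), z = x * y} ≤ pw F N (j+1)
    apply Submodule.span_le.2
    rintro z ⟨x, y, hy, rfl⟩
    cases j with
    | zero => exact Submodule.mem_top
    | succ i =>
      exact Submodule.subset_span ⟨x, y, ih hy, rfl⟩

lemma pw_antitone (F N : Type*) [Field F] [NonUnitalNonAssocRing N] [Module F N] :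
    Antitone (pw F N) :=
  antitone_nat_of_succ_le (pw_succ_le F N)

lemma mul_mem_pw {F N : Type*} [Field F] [NonUnitalNonAssocRing N] [Module F N]
    (x y : N) (m : ℕ) (hy : y ∈ pw F N (m+1)) : x * y ∈ pw F N (m+2) :=
  Submodule.subset_span ⟨x, y, hy, rfl⟩

/-- For an admissible algebra `N` of nil-index `ν`:
`dim N_{[k]} + dim N^k = dim N + 1` for all `0 ≤ k ≤ ν`, where for `k = 0` the paper's
convention `N^0 = F·1 ⊕ N` (the unital extension, of dimension `dim N + 1`) is used. -/
theorem stmt18 {F N : Type*} [Field F] [CharZero F] [NonUnitalCommRing N] [Module F N]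
    [SMulCommClass F N N] [IsScalarTower F N N] [FiniteDimensional F N]
    (hAnn : Module.finrank F (annSub F N) = 1)
    (ν : ℕ) (hnil : pw F N (ν + 1) = ⊥) (hne : pw F N ν ≠ ⊥)
    (π : N →ₗ[F] N) (hproj : π ∘ₗ π = π) (hrange : LinearMap.range π = annSub F N) :
    ∀ k : ℕ, k ≤ ν →
      Module.finrank F (annk F N k)
          + (if k = 0 then Module.finrank F N + 1 else Module.finrank F (pw F N k))
        = Module.finrank F N + 1 := by
  intro k hk
  rcases k with _ | j
  · simp [annk]; exact finrank_bot F N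
  -- now k = j+1 ≥ 1
  set k := j + 1 with hkdef
  have hk1 : 1 ≤ k := Nat.succ_le_succ (Nat.zero_le j)
  have hν1 : 1 ≤ ν := le_trans hk1 hk
  -- π is the identity on annSub
  have hπid : ∀ x ∈ annSub F N, π x = x := by
    intro x hx
    rw [← hrange] at hx
    obtain ⟨u, rfl⟩ := hx
    exact LinearMap.congr_fun hproj u
  -- pw ν ≤ annSub
  have hpwA : pw F N ν ≤ annSub F N := by
    obtain ⟨p, rfl⟩ : ∃ p, ν = p + 1 := ⟨ν - 1, by omega⟩
    intro x hx y
    have h2 : y * x ∈ pw F N (p + 1 + 1) := mul_mem_pw y x p hx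
    rw [hnil] at h2
    rw [mul_comm]
    exact (Submodule.mem_bot F).1 h2
  have hA_eq : pw F N ν = annSub F N := by
    refine Submodule.eq_of_le_of_finrank_eq hpwA ?_
    have h1 : Module.finrank F (pw F N ν) ≤ 1 := hAnn ▸ Submodule.finrank_mono hpwA
    have h2 : 0 < Module.finrank F (pw F N ν) := by
      rcases Submodule.ne_bot_iff _ |>.1 hne with ⟨x, hx, hx0⟩
      refine Nat.pos_of_ne_zero fun h0 => hne (Submodule.finrank_eq_zero.1 h0)
    omega
  -- the key lemma
  have keyD : ∀ m, 1 ≤ m → ∀ b : N, (∀ y ∈ pw F N m, π (b * y) = 0) →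
      ∀ y ∈ pw F N m, b * y = 0 := by
    intro m hm b hb
    suffices aux : ∀ t m', m ≤ m' → ν + 1 ≤ m' + t → ∀ z ∈ pw F N m', b * z = 0 by
      exact fun y hy => aux (ν + 1) m le_rfl (by omega) y hy
    intro t
    induction t with
    | zero =>
      intro m' hm' hb' z hz
      have : z ∈ (⊥ : Submodule F N) := hnil ▸ pw_antitone F N (by omega) hz
      rw [(Submodule.mem_bot F).1 this, mul_zero]
    | succ t ih =>
      intro m' hm' hb' z hz
      have hzA : b * z ∈ annSub F N := by
        intro w
        rw [mul_assoc]
        refine ih (m' + 1) (by omega) (by omega) (z * w) ?_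
        obtain ⟨p, rfl⟩ : ∃ p, m' = p + 1 := ⟨m' - 1, by omega⟩
        rw [mul_comm]
        exact mul_mem_pw w z p hz
      have h1 : π (b * z) = b * z := hπid _ hzA
      have h2 : π (b * z) = 0 := hb z (pw_antitone F N hm' hz)
      rw [← h1, h2]
  -- a functional separating annSub
  have hAne : annSub F N ≠ ⊥ := by
    intro h; rw [h] at hAnn; simp [finrank_bot] at hAnn
  obtain ⟨a0, ha0A, ha0ne⟩ := (Submodule.ne_bot_iff _).1 hAne
  have hspan : Submodule.span F {a0} = annSub F N := by
    refine Submodule.eq_of_le_of_finrank_eq ?_ ?_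
    · simpa [Submodule.span_le] using ha0A
    · rw [finrank_span_singleton ha0ne, hAnn]
  obtain ⟨g, hg⟩ : ∃ g : Module.Dual F N, g a0 ≠ 0 := by
    by_contra h
    push_neg at h
    exact ha0ne ((Module.forall_dual_apply_eq_zero_iff F a0).1 h)
  have hg0 : ∀ x ∈ annSub F N, g x = 0 → x = 0 := by
    intro x hx hgx
    rw [← hspan] at hx
    obtain ⟨c, rfl⟩ := Submodule.mem_span_singleton.1 hx
    rw [map_smul] at hgx
    rcases smul_eq_zero.1 hgx with hc | hga
    · simp [hc]
    · exact absurd hga hg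
  -- the bilinear pairing and the two maps
  set B : N →ₗ[F] N →ₗ[F] F := (LinearMap.mul F N).compr₂ (g ∘ₗ π) with hB
  set T : N →ₗ[F] Module.Dual F (pw F N k) := B.compl₂ (pw F N k).subtype with hT
  have hTapp : ∀ (b : N) (y : pw F N k), T b y = g (π (b * (y : N))) := fun b y => rfl
  have hπmem : ∀ x : N, π x ∈ annSub F N := fun x => hrange ▸ LinearMap.mem_range_self π x
  -- kernel of T
  have hkerT : LinearMap.ker T = annk F N k := by
    ext b
    constructor
    · intro hb
      have hb' : ∀ y ∈ pw F N k, π (b * y) = 0 := by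
        intro y hy
        refine hg0 _ (hπmem _) ?_
        have := LinearMap.congr_fun (LinearMap.mem_ker.1 hb) ⟨y, hy⟩
        rw [hTapp] at this
        simpa using this
      exact keyD k hk1 b hb'
    · intro hb
      refine LinearMap.mem_ker.2 (LinearMap.ext fun y => ?_)
      have : b * (y : N) = 0 := hb (y : N) y.2
      simp [hTapp, this]
  -- kernel of T.flip
  have hSapp : ∀ (y : pw F N k) (b : N), T.flip y b = g (π (b * (y : N))) := fun y b => rfl
  have hkerS : LinearMap.ker T.flip = Submodule.comap (pw F N k).subtype (annSub F N) := by
    ext y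
    constructor
    · intro hy
      have hy' : ∀ b ∈ pw F N 1, π ((y : N) * b) = 0 := by
        intro b _
        rw [mul_comm]
        refine hg0 _ (hπmem _) ?_
        have := LinearMap.congr_fun (LinearMap.mem_ker.1 hy) b
        rw [hSapp] at this
        simpa using this
      have := keyD 1 le_rfl (y : N) hy'
      exact fun w => this w Submodule.mem_top
    · intro hy
      refine LinearMap.mem_ker.2 (LinearMap.ext fun b => ?_)
      have : b * (y : N) = 0 := by rw [mul_comm]; exact hy b
      simp [hSapp, this]
  -- annSub ≤ pw k
  have hAle : annSub F N ≤ pw F N k := hA_eq ▸ pw_antitone F N hk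
  have hkerSrank : Module.finrank F (LinearMap.ker T.flip) = 1 := by
    rw [hkerS]
    rw [LinearEquiv.finrank_eq (Submodule.comapSubtypeEquivOfLe hAle)]
    exact hAnn
  -- rank of flip equals rank
  have hflip : Module.finrank F (LinearMap.range T.flip)
      = Module.finrank F (LinearMap.range T) := by
    have heq : T.flip = T.dualMap ∘ₗ Module.Dual.eval F (pw F N k) := by
      ext y b; rfl
    rw [heq, LinearMap.range_comp,
      LinearMap.range_eq_top.2 (Module.bijective_dual_eval F (pw F N k)).2,
      Submodule.map_top]
    exact LinearMap.finrank_range_dualMap_eq_finrank_range T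
  have rn1 := LinearMap.finrank_range_add_finrank_ker T
  have rn2 := LinearMap.finrank_range_add_finrank_ker T.flip
  rw [hkerT] at rn1
  rw [hkerSrank] at rn2
  have hfd : Module.finrank F (Module.Dual F (pw F N k)) = Module.finrank F (pw F N k) :=
    Subspace.dual_finrank_eq
  rw [if_neg (by omega)]
  omega
end

section
/- Let W be a finite-dimensional vector space over F (char 0) with a non-degenerate quadratic form q, and suppose W = W₁ ⊕ W₂ with both W₁ and W₂ totally isotropic for q. Let c be any cubic form on W₁, extended to W by c(x+y) := c(x) for x ∈ W₁, y ∈ W₂. Define the commutative product x∙y on W by b(x∙y, z) = ω₃(x,y,z), where b is the polarization of q and ω₃ the symmetric trilinear polarization of c. Then this product is associative and satisfies (x∙y)∙z = 0 for all x,y,z ∈ W; in particular p := q + c is a nil-polynomial (the cubic part of the product satisfies W∙W ⊆ W₂ and W∙W₂ = 0). -/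
/-- Let `W` be a finite-dimensional vector space over `F` (char 0) with a
non-degenerate symmetric bilinear form `b` (the polarization of a quadratic form `q`),
`W = W₁ ⊕ W₂` with both summands totally isotropic, and let `ω₃` be a symmetric trilinear
form vanishing whenever an argument lies in `W₂` (the polarization of a cubic form `c` on
`W₁` extended by `c(x + y) = c(x)`).  Let `x∙y` (`m` below) be the commutative product on
`W` defined by `b(x∙y, z) = ω₃(x,y,z)`.  Then `W∙W ⊆ W₂`, `W∙W₂ = 0`, all triple products
`(x∙y)∙z` vanish and in particular the product is associative (so `p = q + c` is a
nil-polynomial). -/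
theorem stmt19 {F W : Type*} [Field F] [CharZero F]
    [AddCommGroup W] [Module F W] [FiniteDimensional F W]
    (W₁ W₂ : Submodule F W) (hcompl : IsCompl W₁ W₂)
    (b : W →ₗ[F] W →ₗ[F] F)
    (hbsymm : ∀ x y : W, b x y = b y x)
    (hbnondeg : ∀ x : W, (∀ y : W, b x y = 0) → x = 0)
    (hW₁iso : ∀ x ∈ W₁, ∀ y ∈ W₁, b x y = 0)
    (hW₂iso : ∀ x ∈ W₂, ∀ y ∈ W₂, b x y = 0)
    (ω₃ : W →ₗ[F] W →ₗ[F] W →ₗ[F] F)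
    (hωsymm₁ : ∀ x y z : W, ω₃ x y z = ω₃ y x z)
    (hωsymm₂ : ∀ x y z : W, ω₃ x y z = ω₃ x z y)
    (hωW₂ : ∀ z ∈ W₂, ∀ x y : W, ω₃ z x y = 0)
    (m : W → W → W)
    (hm : ∀ x y z : W, b (m x y) z = ω₃ x y z) :
    (∀ x y : W, m x y ∈ W₂) ∧
    (∀ x y : W, y ∈ W₂ → m x y = 0) ∧
    (∀ x y z : W, m (m x y) z = 0) ∧
    (∀ x y z : W, m (m x y) z = m x (m y z)) := by
  -- key: anything orthogonal to W₂ lies in W₂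
  have hperp : ∀ v : W, (∀ w ∈ W₂, b v w = 0) → v ∈ W₂ := by
    intro v hv
    obtain ⟨v₁, v₂, hv₁, hv₂, hsum⟩ :=
      Submodule.codisjoint_iff_exists_add_eq.mp hcompl.codisjoint v
    have hz : v₁ = 0 := by
      apply hbnondeg
      intro u
      obtain ⟨u₁, u₂, hu₁, hu₂, husum⟩ :=
        Submodule.codisjoint_iff_exists_add_eq.mp hcompl.codisjoint u
      have h1 : b v₁ u₁ = 0 := hW₁iso _ hv₁ _ hu₁
      have h2 : b v₁ u₂ = 0 := by
        have := hv u₂ hu₂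
        have hvv : b v u₂ = b v₁ u₂ + b v₂ u₂ := by
          rw [← hsum]; simp
        rw [hvv, hW₂iso _ hv₂ _ hu₂, add_zero] at this
        exact this
      calc b v₁ u = b v₁ (u₁ + u₂) := by rw [husum]
        _ = b v₁ u₁ + b v₁ u₂ := by simp
        _ = 0 := by rw [h1, h2, add_zero]
    rw [← hsum, hz, zero_add]; exact hv₂
  have hmem : ∀ x y : W, m x y ∈ W₂ := by
    intro x y
    apply hperp
    intro w hw
    rw [hm, hωsymm₂, hωsymm₁]
    exact hωW₂ w hw x y
  have hzero : ∀ x y : W, y ∈ W₂ → m x y = 0 := by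
    intro x y hy
    apply hbnondeg
    intro z
    rw [hm, hωsymm₁]
    exact hωW₂ y hy x z
  have htriple : ∀ x y z : W, m (m x y) z = 0 := by
    intro x y z
    apply hbnondeg
    intro w
    rw [hm]
    exact hωW₂ _ (hmem x y) z w
  refine ⟨hmem, hzero, htriple, fun x y z => ?_⟩
  rw [htriple, hzero x _ (hmem y z)]
end
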